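/- arXiv:2210.05379 — 3 statements merged into one kernel-verified Lean document; each statement's English description precedes it below -/
import Mathlib

section
/- Every local minimizer x̄ of problem (P) (i.e., x̄ is feasible and there is a neighborhood of x̄ on which f(x̄) ≤ f(x) for all feasible x) is an AM-stationary point of (P). -/
open Filter Topology RealInnerProductSpace

noncomputable section

/-- The (set-valued) Euclidean projection of `x` onto `D`:
`Π_D(x) = argmin_{z ∈ D} ‖z - x‖`. -/
def projSet {E : Type*} [NormedAddCommGroup E] (D : Set E) (x : E) : Set E :=
  {z | z ∈ D ∧ ∀ w ∈ D, ‖z - x‖ ≤ ‖w - x‖}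

/-- The limiting (Mordukhovich) normal cone to `D` at `x`:
`N_D^lim(x) = limsup_{v → x} cone(v - Π_D(v))`, empty outside `D`. -/
def limNormalCone {E : Type*} [NormedAddCommGroup E] [NormedSpace ℝ E]
    (D : Set E) (x : E) : Set E :=
  {w | x ∈ D ∧ ∃ v ws : ℕ → E,
    Tendsto v atTop (𝓝 x) ∧ Tendsto ws atTop (𝓝 w) ∧
    ∀ j, ∃ t : ℝ, ∃ p, 0 ≤ t ∧ p ∈ projSet D (v j) ∧ ws j = t • (v j - p)}

/-- The normal cone (of convex analysis) to the convex set `C` at `y`, empty outside `C`. -/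
def convNormalCone {E : Type*} [NormedAddCommGroup E] [InnerProductSpace ℝ E]
    (C : Set E) (y : E) : Set E :=
  {l | y ∈ C ∧ ∀ c ∈ C, ⟪l, c - y⟫ ≤ 0}

variable {X Y : Type*} [NormedAddCommGroup X] [InnerProductSpace ℝ X] [FiniteDimensional ℝ X]
  [NormedAddCommGroup Y] [InnerProductSpace ℝ Y] [FiniteDimensional ℝ Y]

/-- `xb` is an AM-stationary (asymptotically M-stationary) point of problem (P):
minimize `f x` s.t. `G x ∈ C`, `x ∈ D`. -/
def AMStationary (f : X → ℝ) (G : X → Y) (C : Set Y) (D : Set X) (xb : X) : Prop :=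
  G xb ∈ C ∧ xb ∈ D ∧
    ∃ (xs εs : ℕ → X) (zs lam : ℕ → Y),
      Tendsto xs atTop (𝓝 xb) ∧ Tendsto εs atTop (𝓝 0) ∧ Tendsto zs atTop (𝓝 0) ∧
      ∀ k, lam k ∈ convNormalCone C (G (xs k) - zs k) ∧
        ∃ w ∈ limNormalCone D (xs k),
          εs k = gradient f (xs k) +
            ContinuousLinearMap.adjoint (fderiv ℝ G (xs k)) (lam k) + w

lemma aux_proj_seg {E : Type*} [NormedAddCommGroup E] [NormedSpace ℝ E] {D : Set E} {x p : E}
    (hp : p ∈ projSet D x) {s : ℝ} (hs0 : 0 ≤ s) (hs1 : s ≤ 1) :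
    p ∈ projSet D (p + s • (x - p)) := by
  refine ⟨hp.1, fun q hq => ?_⟩
  have h1 : ‖p - (p + s • (x - p))‖ = s * ‖x - p‖ := by
    rw [show p - (p + s • (x - p)) = (-s) • (x - p) by module, norm_smul]
    simp [abs_of_nonneg hs0]
  have h2 : ‖x - (p + s • (x - p))‖ = (1 - s) * ‖x - p‖ := by
    rw [show x - (p + s • (x - p)) = (1 - s) • (x - p) by module, norm_smul]
    simp [abs_of_nonneg (by linarith : (0:ℝ) ≤ 1 - s)]
  have h3 : ‖p - x‖ ≤ ‖q - x‖ := hp.2 q hq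
  have h4 : ‖q - x‖ - ‖x - (p + s • (x - p))‖ ≤ ‖q - (p + s • (x - p))‖ := by
    have := norm_sub_le_norm_sub_add_norm_sub q (p + s • (x - p)) x
    rw [norm_sub_rev (p + s • (x - p)) x] at this
    linarith
  rw [h1]
  rw [norm_sub_rev p x] at h3
  nlinarith [norm_nonneg (x - p), h2, h3, h4]

lemma aux_mem_limNormalCone {E : Type*} [NormedAddCommGroup E] [NormedSpace ℝ E] {D : Set E}
    {x p : E} (hp : p ∈ projSet D x) {a : ℝ} (ha : 0 ≤ a) :
    a • (x - p) ∈ limNormalCone D p := by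
  refine ⟨hp.1, fun j => p + (1 / (j + 1 : ℝ)) • (x - p), fun _ => a • (x - p), ?_, tendsto_const_nhds, ?_⟩
  · have h0 : Tendsto (fun j : ℕ => (1 / (j + 1 : ℝ))) atTop (𝓝 0) :=
      tendsto_one_div_add_atTop_nhds_zero_nat
    have := (h0.smul_const (x - p)).const_add p
    simpa using this
  · intro j
    have hj : (0:ℝ) < 1 / (j + 1 : ℝ) := by positivity
    refine ⟨a * (j + 1), p, by positivity, aux_proj_seg hp hj.le ?_, ?_⟩
    · rw [div_le_one (by positivity)]; linarith
    · rw [show p + (1 / (j + 1 : ℝ)) • (x - p) - p = (1 / (j + 1 : ℝ)) • (x - p) by module,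
        smul_smul]
      congr 1
      field_simp

lemma aux_varineq {E : Type*} [NormedAddCommGroup E] [InnerProductSpace ℝ E] {C : Set E}
    (hC : Convex ℝ C) {u y : E} (hy : y ∈ C) (hmin : ∀ c ∈ C, ‖u - y‖ ≤ ‖u - c‖) :
    ∀ c ∈ C, ⟪u - y, c - y⟫ ≤ 0 := by
  intro c hc
  by_contra h
  push_neg at h
  set b := ⟪u - y, c - y⟫ with hb
  have hcy : c - y ≠ 0 := by
    intro h0
    rw [h0, inner_zero_right] at hb
    exact absurd hb.symm (by linarith)
  set q := ‖c - y‖ ^ 2 with hq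
  have hq0 : 0 < q := by rw [hq]; exact pow_pos (norm_pos_iff.mpr hcy) 2
  set t := min 1 (b / q) with ht
  have ht0 : 0 < t := lt_min one_pos (div_pos h hq0)
  have ht1 : t ≤ 1 := min_le_left _ _
  have htq : t * q ≤ b := by
    rcases min_le_right 1 (b / q) |>.lt_or_eq with h' | h'
    · calc t * q ≤ (b / q) * q := by nlinarith [min_le_right 1 (b/q)]
        _ = b := by field_simp
    · calc t * q ≤ (b / q) * q := by nlinarith [min_le_right 1 (b/q)]
        _ = b := by field_simp
  have hmem : y + t • (c - y) ∈ C := by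
    have := hC hy hc (by linarith : (0:ℝ) ≤ 1 - t) ht0.le (by ring)
    convert this using 1
    module
  have hle := hmin _ hmem
  have hexp : ‖u - (y + t • (c - y))‖ ^ 2 = ‖u - y‖ ^ 2 - 2 * t * b + t ^ 2 * q := by
    rw [show u - (y + t • (c - y)) = (u - y) - t • (c - y) by module]
    rw [norm_sub_sq_real, real_inner_smul_right, norm_smul]
    rw [hq]
    simp [mul_pow, abs_of_nonneg ht0.le]
    ring
  have hsq : ‖u - y‖ ^ 2 ≤ ‖u - (y + t • (c - y))‖ ^ 2 := by
    have := hle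
    nlinarith [norm_nonneg (u - y), norm_nonneg (u - (y + t • (c - y)))]
  nlinarith

lemma aux_psi_deriv (f : X → ℝ) (G : X → Y) (hf : ContDiff ℝ 1 f) (hG : ContDiff ℝ 1 G)
    (c a : ℝ) (y : Y) (p xb x : X)
    (hloc : IsLocalMin (fun v => f v + c/2 * ⟪G v - y, G v - y⟫ + a/2 * ⟪v - p, v - p⟫
      + ⟪v - xb, v - xb⟫) x) :
    gradient f x + ContinuousLinearMap.adjoint (fderiv ℝ G x) (c • (G x - y)) + a • (x - p)
      + (2:ℝ) • (x - xb) = 0 := by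
  set A := fderiv ℝ G x with hA
  have hfd : HasFDerivAt f (fderiv ℝ f x) x := (hf.differentiable one_ne_zero x).hasFDerivAt
  have hGd : HasFDerivAt G A x := (hG.differentiable one_ne_zero x).hasFDerivAt
  have h1 : HasFDerivAt (fun v => G v - y) A x := hGd.sub_const y
  have h2 : HasFDerivAt (fun v : X => v - p) (ContinuousLinearMap.id ℝ X) x :=
    (hasFDerivAt_id x).sub_const p
  have h3 : HasFDerivAt (fun v : X => v - xb) (ContinuousLinearMap.id ℝ X) x :=
    (hasFDerivAt_id x).sub_const xb
  have htot := ((hfd.add ((h1.inner ℝ h1).const_mul (c/2))).add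
    ((h2.inner ℝ h2).const_mul (a/2))).add (h3.inner ℝ h3)
  have h0 := hloc.hasFDerivAt_eq_zero htot
  set g := gradient f x + ContinuousLinearMap.adjoint A (c • (G x - y)) + a • (x - p)
      + (2:ℝ) • (x - xb) with hg
  have key : ∀ u : X, ⟪g, u⟫ = 0 := by
    intro u
    have hv := congrFun (congrArg DFunLike.coe h0) u
    simp only [ContinuousLinearMap.add_apply, ContinuousLinearMap.smul_apply,
      ContinuousLinearMap.comp_apply, ContinuousLinearMap.prod_apply, fderivInnerCLM_apply,
      ContinuousLinearMap.zero_apply, ContinuousLinearMap.id_apply, smul_eq_mul] at hv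
    have hgrad : ⟪gradient f x, u⟫ = fderiv ℝ f x u := InnerProductSpace.toDual_symm_apply
    rw [hg]
    simp only [inner_add_left, ContinuousLinearMap.adjoint_inner_left, real_inner_smul_left]
    rw [hgrad]
    have e1 : ⟪A u, G x - y⟫ = ⟪G x - y, A u⟫ := real_inner_comm _ _
    have e2 : ⟪u, x - p⟫ = ⟪x - p, u⟫ := real_inner_comm _ _
    have e3 : ⟪u, x - xb⟫ = ⟪x - xb, u⟫ := real_inner_comm _ _
    rw [e1, e2, e3] at hv
    linarith
  have := key g
  rwa [inner_self_eq_zero] at this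

set_option maxHeartbeats 2000000 in
/-- every local minimizer of (P) is AM-stationary. -/
theorem local_minimizer_is_AM_stationary
    (f : X → ℝ) (G : X → Y) (C : Set Y) (D : Set X)
    (hf : ContDiff ℝ 1 f) (hG : ContDiff ℝ 1 G)
    (hCne : C.Nonempty) (hCcl : IsClosed C) (hCconv : Convex ℝ C)
    (hDne : D.Nonempty) (hDcl : IsClosed D)
    (xb : X) (hGxb : G xb ∈ C) (hxbD : xb ∈ D)
    (hmin : ∃ U ∈ 𝓝 xb, ∀ x ∈ U, G x ∈ C → x ∈ D → f xb ≤ f x) :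
    AMStationary f G C D xb := by
  classical
  obtain ⟨U, hU, hUmin⟩ := hmin
  obtain ⟨ε, hε0, hεU⟩ := Metric.mem_nhds_iff.mp hU
  set r : ℝ := ε/2 with hr
  have hr0 : 0 < r := by positivity
  have hball : Metric.closedBall xb r ⊆ U :=
    (Metric.closedBall_subset_ball (by linarith)).trans hεU
  set K : Set X := Metric.closedBall xb r with hKdef
  have hK : IsCompact K := isCompact_closedBall _ _
  have hxbK : xb ∈ K := Metric.mem_closedBall_self hr0.le
  set K2 : Set X := Metric.closedBall xb (2*r) with hK2def
  have hK2 : IsCompact K2 := isCompact_closedBall _ _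
  -- minimum of f on K
  obtain ⟨xm, hxmK, hfm⟩ := hK.exists_isMinOn ⟨xb, hxbK⟩ (hf.continuous.continuousOn)
  set M₀ : ℝ := f xb - f xm with hM₀def
  have hM₀ : 0 ≤ M₀ := by
    have := isMinOn_iff.mp hfm xb hxbK
    simp only [hM₀def]; linarith
  -- uniform continuity of the derivative of G on K2
  have hUC : ∀ k : ℕ, ∃ δ : ℝ, 0 < δ ∧ δ ≤ 1/((k:ℝ)+1) ∧ ∀ u ∈ K2, ∀ v ∈ K2,
      dist u v < δ → dist (fderiv ℝ G u) (fderiv ℝ G v) < 1/((k:ℝ)+1)^2 := by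
    have hUCON := hK2.uniformContinuousOn_of_continuous
      ((hG.continuous_fderiv one_ne_zero).continuousOn)
    rw [Metric.uniformContinuousOn_iff] at hUCON
    intro k
    obtain ⟨δ, δpos, hδ⟩ := hUCON (1/((k:ℝ)+1)^2) (by positivity)
    exact ⟨min δ (1/((k:ℝ)+1)), lt_min δpos (by positivity), min_le_right _ _,
      fun u hu v hv hd => hδ u hu v hv (lt_of_lt_of_le hd (min_le_left _ _))⟩
  choose δ hδpos hδle hδuc using hUC
  set a : ℕ → ℝ := fun k => 8*(M₀+1)/(δ k)^2 with hadef
  set c : ℕ → ℝ := fun k => (k:ℝ)+1 with hcdef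
  have hc1 : ∀ k, 1 ≤ c k := by intro k; simp only [hcdef]; exact le_add_of_nonneg_left (Nat.cast_nonneg k)
  have hc0 : ∀ k, 0 < c k := fun k => lt_of_lt_of_le one_pos (hc1 k)
  have ha0 : ∀ k, 0 < a k := by intro k; have := hδpos k; simp only [hadef]; positivity
  -- the penalized functions and their minimizers
  set φ : ℕ → X → ℝ := fun k x => f x + (c k)/2*(Metric.infDist (G x) C)^2
    + (a k)/2*(Metric.infDist x D)^2 + ‖x - xb‖^2 with hφdef
  have hφcont : ∀ k, Continuous (φ k) := by
    intro k
    refine ((hf.continuous.add ?_).add ?_).add ?_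
    · exact continuous_const.mul (((Metric.continuous_infDist_pt C).comp hG.continuous).pow 2)
    · exact continuous_const.mul ((Metric.continuous_infDist_pt D).pow 2)
    · exact ((continuous_id.sub continuous_const).norm).pow 2
  have hexmin : ∀ k, ∃ x ∈ K, IsMinOn (φ k) K x :=
    fun k => hK.exists_isMinOn ⟨xb, hxbK⟩ (hφcont k).continuousOn
  choose xk hxkK hxkmin using hexmin
  -- the projections
  have hexp : ∀ k, ∃ q ∈ D, Metric.infDist (xk k) D = dist (xk k) q :=
    fun k => hDcl.exists_infDist_eq_dist hDne (xk k)
  choose p hpD hpdist using hexp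
  have hexy : ∀ k, ∃ q ∈ C, Metric.infDist (G (xk k)) C = dist (G (xk k)) q :=
    fun k => hCcl.exists_infDist_eq_dist hCne (G (xk k))
  choose y hyC hydist using hexy
  -- basic bounds
  have hφxb : ∀ k, φ k xb = f xb := by
    intro k
    simp [hφdef, Metric.infDist_zero_of_mem hGxb, Metric.infDist_zero_of_mem hxbD]
  have hmle : ∀ k, f xm ≤ f (xk k) := fun k => isMinOn_iff.mp hfm (xk k) (hxkK k)
  have key : ∀ k, (c k)/2*(Metric.infDist (G (xk k)) C)^2 ≤ M₀ ∧
      (a k)/2*(Metric.infDist (xk k) D)^2 ≤ M₀ ∧ f (xk k) + ‖xk k - xb‖^2 ≤ f xb := by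
    intro k
    have h1 := isMinOn_iff.mp (hxkmin k) xb hxbK
    rw [hφxb k] at h1
    have h2 := hmle k
    have n1 : 0 ≤ (c k)/2*(Metric.infDist (G (xk k)) C)^2 := by
      have := (hc0 k).le; positivity
    have n2 : 0 ≤ (a k)/2*(Metric.infDist (xk k) D)^2 := by
      have := (ha0 k).le; positivity
    have n3 : 0 ≤ ‖xk k - xb‖^2 := by positivity
    simp only [hφdef] at h1
    refine ⟨by simp only [hM₀def]; linarith, by simp only [hM₀def]; linarith,
      by linarith⟩
  have hdD : ∀ k, Metric.infDist (xk k) D ≤ δ k / 2 := by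
    intro k
    have h := (key k).2.1
    have hδk := hδpos k
    set d := Metric.infDist (xk k) D with hd
    have hd0 : 0 ≤ d := Metric.infDist_nonneg
    have h2 : 4*(M₀+1)*d^2 ≤ M₀*(δ k)^2 := by
      have h3 := mul_le_mul_of_nonneg_right h (sq_nonneg (δ k))
      have hδne : (δ k) ≠ 0 := (hδpos k).ne'
      have h4 : (a k)/2*d^2*(δ k)^2 = 4*(M₀+1)*d^2 := by
        simp only [hadef]; field_simp; ring
      rw [h4] at h3
      linarith
    by_contra hlt
    push_neg at hlt
    have hd2 : (δ k/2)^2 < d^2 := by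
      apply pow_lt_pow_left₀ hlt (by positivity) (by norm_num)
    nlinarith [hd2, hM₀, mul_pos hδk hδk]
  have hdG2 : ∀ k, (c k) * (Metric.infDist (G (xk k)) C)^2 ≤ 2*M₀ := by
    intro k
    have h := (key k).1
    have h2 : c k * Metric.infDist (G (xk k)) C ^ 2
        = 2*(c k / 2 * Metric.infDist (G (xk k)) C ^ 2) := by ring
    rw [h2]; linarith
  -- convergence of the distances
  have hdD0 : Tendsto (fun k => Metric.infDist (xk k) D) atTop (𝓝 0) := by
    refine squeeze_zero (g := fun k : ℕ => 1/((k:ℝ)+1))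
      (fun k => Metric.infDist_nonneg) ?_ ?_
    · intro k
      have := hdD k
      have := hδle k
      have := hδpos k
      linarith
    · exact tendsto_one_div_add_atTop_nhds_zero_nat
  have hdG0 : Tendsto (fun k => Metric.infDist (G (xk k)) C) atTop (𝓝 0) := by
    have hsq : Tendsto (fun k => (Metric.infDist (G (xk k)) C)^2) atTop (𝓝 0) := by
      refine squeeze_zero (g := fun k : ℕ => 2*M₀*(1/((k:ℝ)+1))) (fun k => sq_nonneg _) ?_ ?_
      · intro k
        have h' : ((k:ℝ)+1) * (Metric.infDist (G (xk k)) C)^2 ≤ 2*M₀ := hdG2 k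
        have hck : (0:ℝ) < (k:ℝ)+1 := by positivity
        show (Metric.infDist (G (xk k)) C)^2 ≤ 2*M₀*(1/((k:ℝ)+1))
        rw [mul_one_div, le_div_iff₀ hck]
        linarith
      · have := tendsto_one_div_add_atTop_nhds_zero_nat.const_mul (2*M₀)
        simpa using this
    have h2 := (Real.continuous_sqrt.tendsto 0).comp hsq
    rw [Real.sqrt_zero] at h2
    exact h2.congr (fun k => Real.sqrt_sq Metric.infDist_nonneg)
  -- xk tends to xb
  have hxk0 : Tendsto xk atTop (𝓝 xb) := by
    apply tendsto_of_subseq_tendsto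
    intro ns hns
    obtain ⟨xs, hxsK, ms, hms, hlim⟩ := hK.tendsto_subseq (x := fun n => xk (ns n))
      (fun n => hxkK (ns n))
    refine ⟨ms, ?_⟩
    have hcomp : Tendsto (fun n => ns (ms n)) atTop atTop := hns.comp hms.tendsto_atTop
    -- xs is feasible
    have hxsD : xs ∈ D := by
      rw [hDcl.mem_iff_infDist_zero hDne]
      have h1 : Tendsto (fun n => Metric.infDist (xk (ns (ms n))) D) atTop
          (𝓝 (Metric.infDist xs D)) :=
        ((Metric.continuous_infDist_pt D).tendsto xs).comp hlim
      have h2 : Tendsto (fun n => Metric.infDist (xk (ns (ms n))) D) atTop (𝓝 0) :=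
        hdD0.comp hcomp
      exact tendsto_nhds_unique h1 h2
    have hxsC : G xs ∈ C := by
      rw [hCcl.mem_iff_infDist_zero hCne]
      have h1 : Tendsto (fun n => Metric.infDist (G (xk (ns (ms n)))) C) atTop
          (𝓝 (Metric.infDist (G xs) C)) :=
        ((Metric.continuous_infDist_pt C).tendsto (G xs)).comp (hG.continuous.tendsto xs |>.comp hlim)
      have h2 : Tendsto (fun n => Metric.infDist (G (xk (ns (ms n)))) C) atTop (𝓝 0) :=
        hdG0.comp hcomp
      exact tendsto_nhds_unique h1 h2
    have hfle : f xs + ‖xs - xb‖^2 ≤ f xb := by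
      have hcont : Continuous (fun v : X => f v + ‖v - xb‖^2) :=
        hf.continuous.add (((continuous_id.sub continuous_const).norm).pow 2)
      have h1 : Tendsto (fun n => f (xk (ns (ms n))) + ‖xk (ns (ms n)) - xb‖^2) atTop
          (𝓝 (f xs + ‖xs - xb‖^2)) := (hcont.tendsto xs).comp hlim
      exact le_of_tendsto h1 (Eventually.of_forall (fun n => (key (ns (ms n))).2.2))
    have hge : f xb ≤ f xs := hUmin xs (hball hxsK) hxsC hxsD
    have hxseq : xs = xb := by
      have h0 : ‖xs - xb‖^2 ≤ 0 := by linarith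
      have : ‖xs - xb‖ = 0 := by nlinarith [norm_nonneg (xs - xb)]
      rw [norm_eq_zero, sub_eq_zero] at this
      exact this
    rwa [hxseq] at hlim
  -- p tends to xb
  have hp0 : Tendsto p atTop (𝓝 xb) := by
    rw [tendsto_iff_dist_tendsto_zero]
    refine squeeze_zero (g := fun k : ℕ => Metric.infDist (xk k) D + dist (xk k) xb)
      (fun k => dist_nonneg) ?_ ?_
    · intro k
      calc dist (p k) xb ≤ dist (p k) (xk k) + dist (xk k) xb := dist_triangle _ _ _
        _ = Metric.infDist (xk k) D + dist (xk k) xb := by rw [dist_comm, ← hpdist k]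
    · have h2 : Tendsto (fun k => dist (xk k) xb) atTop (𝓝 0) :=
        tendsto_iff_dist_tendsto_zero.mp hxk0
      simpa using hdD0.add h2
  -- y tends to G xb
  have hy0 : Tendsto y atTop (𝓝 (G xb)) := by
    rw [tendsto_iff_dist_tendsto_zero]
    refine squeeze_zero (g := fun k : ℕ => Metric.infDist (G (xk k)) C + dist (G (xk k)) (G xb))
      (fun k => dist_nonneg) ?_ ?_
    · intro k
      calc dist (y k) (G xb) ≤ dist (y k) (G (xk k)) + dist (G (xk k)) (G xb) :=
            dist_triangle _ _ _
        _ = Metric.infDist (G (xk k)) C + dist (G (xk k)) (G xb) := by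
            rw [dist_comm, ← hydist k]
    · have h2 : Tendsto (fun k => dist (G (xk k)) (G xb)) atTop (𝓝 0) :=
        tendsto_iff_dist_tendsto_zero.mp ((hG.continuous.tendsto xb).comp hxk0)
      simpa using hdG0.add h2
  -- eventually in the open ball
  have hev : ∀ᶠ k in atTop, xk k ∈ Metric.ball xb r :=
    hxk0 (Metric.ball_mem_nhds xb hr0)
  obtain ⟨N, hN⟩ := eventually_atTop.mp hev
  -- the stationarity equation at xk k
  have heq : ∀ k, N ≤ k →
      gradient f (xk k) + ContinuousLinearMap.adjoint (fderiv ℝ G (xk k))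
        ((c k) • (G (xk k) - y k)) + (a k) • (xk k - p k) + (2:ℝ) • (xk k - xb) = 0 := by
    intro k hk
    apply aux_psi_deriv f G hf hG (c k) (a k) (y k) (p k) xb (xk k)
    have hballmem : Metric.ball xb r ∈ 𝓝 (xk k) :=
      Metric.isOpen_ball.mem_nhds (hN k hk)
    have hψφ : ∀ v : X, φ k v ≤ f v + (c k)/2 * ⟪G v - y k, G v - y k⟫
        + (a k)/2 * ⟪v - p k, v - p k⟫ + ⟪v - xb, v - xb⟫ := by
      intro v
      simp only [hφdef, real_inner_self_eq_norm_sq]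
      have h1 : (Metric.infDist (G v) C)^2 ≤ ‖G v - y k‖^2 := by
        have h : Metric.infDist (G v) C ≤ dist (G v) (y k) :=
          Metric.infDist_le_dist_of_mem (hyC k)
        rw [dist_eq_norm] at h
        nlinarith [Metric.infDist_nonneg (x := G v) (s := C)]
      have h2 : (Metric.infDist v D)^2 ≤ ‖v - p k‖^2 := by
        have h : Metric.infDist v D ≤ dist v (p k) :=
          Metric.infDist_le_dist_of_mem (hpD k)
        rw [dist_eq_norm] at h
        nlinarith [Metric.infDist_nonneg (x := v) (s := D)]
      have := mul_le_mul_of_nonneg_left h1 (by positivity : (0:ℝ) ≤ (c k)/2)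
      have := mul_le_mul_of_nonneg_left h2 (by positivity : (0:ℝ) ≤ (a k)/2)
      linarith
    have hψeq : φ k (xk k) = f (xk k) + (c k)/2 * ⟪G (xk k) - y k, G (xk k) - y k⟫
        + (a k)/2 * ⟪xk k - p k, xk k - p k⟫ + ⟪xk k - xb, xk k - xb⟫ := by
      simp only [hφdef, real_inner_self_eq_norm_sq]
      rw [← dist_eq_norm (G (xk k)) (y k), ← dist_eq_norm (xk k) (p k),
        ← hydist k, ← hpdist k]
    filter_upwards [hballmem] with v hv
    calc f (xk k) + (c k)/2 * ⟪G (xk k) - y k, G (xk k) - y k⟫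
        + (a k)/2 * ⟪xk k - p k, xk k - p k⟫ + ⟪xk k - xb, xk k - xb⟫
        = φ k (xk k) := hψeq.symm
      _ ≤ φ k v := isMinOn_iff.mp (hxkmin k) v (Metric.ball_subset_closedBall hv)
      _ ≤ _ := hψφ v
  -- assemble the sequences (shifted by N)
  refine ⟨hGxb, hxbD, fun j => p (j + N),
    fun j => gradient f (p (j + N)) + ContinuousLinearMap.adjoint (fderiv ℝ G (p (j + N)))
      ((c (j+N)) • (G (xk (j + N)) - y (j + N))) + (a (j+N)) • (xk (j+N) - p (j+N)),
    fun j => G (p (j + N)) - y (j + N),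
    fun j => (c (j+N)) • (G (xk (j + N)) - y (j + N)), ?_, ?_, ?_, ?_⟩
  · exact hp0.comp (tendsto_add_atTop_nat N)
  · -- εs tends to 0
    have hgradcont : Continuous (fun v : X => gradient f v) := by
      have h1 : Continuous (fderiv ℝ f) := hf.continuous_fderiv one_ne_zero
      exact ((InnerProductSpace.toDual ℝ X).symm.continuous).comp h1
    have t1 : Tendsto (fun k => gradient f (p k) - gradient f (xk k)) atTop (𝓝 0) := by
      have := ((hgradcont.tendsto xb).comp hp0).sub ((hgradcont.tendsto xb).comp hxk0)
      simpa using this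
    set lam' : ℕ → Y := fun k => (c k) • (G (xk k) - y k) with hlamdef
    set mid : ℕ → X := fun k => ContinuousLinearMap.adjoint (fderiv ℝ G (p k)) (lam' k)
      - ContinuousLinearMap.adjoint (fderiv ℝ G (xk k)) (lam' k) with hmiddef
    have hmidnorm : ∀ k, ‖mid k‖ ≤ ‖fderiv ℝ G (p k) - fderiv ℝ G (xk k)‖ * ‖lam' k‖ := by
      intro k
      have h1 : mid k = (ContinuousLinearMap.adjoint (fderiv ℝ G (p k) - fderiv ℝ G (xk k)))
          (lam' k) := by
        simp only [hmiddef, map_sub, ContinuousLinearMap.sub_apply]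
      rw [h1]
      calc ‖(ContinuousLinearMap.adjoint (fderiv ℝ G (p k) - fderiv ℝ G (xk k))) (lam' k)‖
          ≤ ‖ContinuousLinearMap.adjoint (fderiv ℝ G (p k) - fderiv ℝ G (xk k))‖ * ‖lam' k‖ :=
            ContinuousLinearMap.le_opNorm _ _
        _ = ‖fderiv ℝ G (p k) - fderiv ℝ G (xk k)‖ * ‖lam' k‖ := by
            rw [LinearIsometryEquiv.norm_map]
    have hxkK2 : ∀ k, xk k ∈ K2 := by
      intro k
      have := hxkK k
      simp only [hKdef, Metric.mem_closedBall] at this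
      simp only [hK2def, Metric.mem_closedBall]
      linarith
    have hpK2 : ∀ k, p k ∈ K2 := by
      intro k
      have h1 : dist (xk k) (p k) ≤ r := by
        rw [← hpdist k]
        have h2 : Metric.infDist (xk k) D ≤ dist (xk k) xb :=
          Metric.infDist_le_dist_of_mem hxbD
        have h3 : dist (xk k) xb ≤ r := by
          have := hxkK k; simpa [hKdef, Metric.mem_closedBall] using this
        linarith
      have h3 : dist (xk k) xb ≤ r := by
        have := hxkK k; simpa [hKdef, Metric.mem_closedBall] using this
      simp only [hK2def, Metric.mem_closedBall]
      calc dist (p k) xb ≤ dist (p k) (xk k) + dist (xk k) xb := dist_triangle _ _ _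
        _ ≤ r + r := by rw [dist_comm]; exact add_le_add h1 h3
        _ = 2*r := by ring
    have hBA : ∀ k, ‖fderiv ℝ G (p k) - fderiv ℝ G (xk k)‖ ≤ 1/(c k)^2 := by
      intro k
      have hd : dist (p k) (xk k) < δ k := by
        rw [dist_comm, ← hpdist k]
        have := hdD k
        have := hδpos k
        linarith
      have := hδuc k (p k) (hpK2 k) (xk k) (hxkK2 k) hd
      rw [dist_eq_norm] at this
      exact this.le
    have hlam2 : ∀ k, ‖lam' k‖^2 ≤ 2*M₀*(c k) := by
      intro k
      have h1 : ‖lam' k‖ = c k * ‖G (xk k) - y k‖ := by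
        simp only [hlamdef, norm_smul, Real.norm_eq_abs, abs_of_pos (hc0 k)]
      have h2 : ‖G (xk k) - y k‖ = Metric.infDist (G (xk k)) C := by
        rw [← dist_eq_norm, ← hydist k]
      have h3 := hdG2 k
      have h0 := (hc0 k).le
      rw [h1, h2, mul_pow]
      nlinarith [Metric.infDist_nonneg (x := G (xk k)) (s := C)]
    have t2 : Tendsto mid atTop (𝓝 0) := by
      rw [tendsto_zero_iff_norm_tendsto_zero]
      have hsq : Tendsto (fun k => ‖mid k‖^2) atTop (𝓝 0) := by
        refine squeeze_zero (g := fun k : ℕ => 2*M₀*(1/((k:ℝ)+1))) (fun k => sq_nonneg _)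
          ?_ ?_
        · intro k
          show ‖mid k‖^2 ≤ 2*M₀*(1/(c k))
          have step1 : ‖mid k‖ ≤ (1/(c k)^2) * ‖lam' k‖ :=
            le_trans (hmidnorm k) (mul_le_mul_of_nonneg_right (hBA k) (norm_nonneg _))
          have step2 : ‖mid k‖^2 ≤ (1/(c k)^2)^2 * ‖lam' k‖^2 := by
            have := pow_le_pow_left₀ (norm_nonneg (mid k)) step1 2
            calc ‖mid k‖^2 ≤ ((1/(c k)^2) * ‖lam' k‖)^2 := this
              _ = (1/(c k)^2)^2 * ‖lam' k‖^2 := by ring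
          have step3 : (1/(c k)^2)^2 * ‖lam' k‖^2 ≤ (1/(c k)^2)^2 * (2*M₀*(c k)) :=
            mul_le_mul_of_nonneg_left (hlam2 k) (by positivity)
          have hck0 := hc0 k
          have hck1 := hc1 k
          have step4 : (1/(c k)^2)^2 * (2*M₀*(c k)) ≤ 2*M₀*(1/(c k)) := by
            have he : (1/(c k)^2)^2 * (2*M₀*(c k)) = 2*M₀/(c k)^3 := by
              field_simp
            have he2 : 2*M₀*(1/(c k)) = 2*M₀/(c k) := by ring
            rw [he, he2]
            apply div_le_div_of_nonneg_left (by linarith) hck0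
            nlinarith
          linarith
        · have := tendsto_one_div_add_atTop_nhds_zero_nat.const_mul (2*M₀)
          simpa using this
      have h2 := (Real.continuous_sqrt.tendsto 0).comp hsq
      rw [Real.sqrt_zero] at h2
      exact h2.congr (fun k => Real.sqrt_sq (norm_nonneg _))
    have t3 : Tendsto (fun k => (2:ℝ) • (xk k - xb)) atTop (𝓝 0) := by
      have := (hxk0.sub_const xb).const_smul (2:ℝ)
      simpa using this
    have htot : Tendsto (fun k => (gradient f (p k) - gradient f (xk k)) + mid k
        - (2:ℝ) • (xk k - xb)) atTop (𝓝 0) := by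
      have := (t1.add t2).sub t3
      simpa using this
    have hshift := htot.comp (tendsto_add_atTop_nat N)
    apply Tendsto.congr _ hshift
    intro j
    simp only [Function.comp]
    set k := j + N with hkdef
    have hk : N ≤ k := Nat.le_add_left N j
    have h' := heq k hk
    rw [eq_comm, ← sub_eq_zero]
    rw [show gradient f (p k) + ContinuousLinearMap.adjoint (fderiv ℝ G (p k)) (c k • (G (xk k) - y k))
        + a k • (xk k - p k)
      - (gradient f (p k) - gradient f (xk k) + mid k - (2:ℝ) • (xk k - xb))
      = gradient f (xk k) + ContinuousLinearMap.adjoint (fderiv ℝ G (xk k)) (c k • (G (xk k) - y k))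
        + a k • (xk k - p k) + (2:ℝ) • (xk k - xb) from by
        simp only [hmiddef, hlamdef]; abel]
    exact h'
  · -- zs tends to 0
    have h1 : Tendsto (fun k => G (p k) - y k) atTop (𝓝 0) := by
      have := ((hG.continuous.tendsto xb).comp hp0).sub hy0
      simpa using this
    exact h1.comp (tendsto_add_atTop_nat N)
  · intro j
    set k := j + N with hk
    constructor
    · -- lam ∈ convNormalCone C (G (xs j) - zs j)
      have hyk : G (p k) - (G (p k) - y k) = y k := by abel
      rw [hyk]
      refine ⟨hyC k, fun cc hcc => ?_⟩
      have hvi := aux_varineq (u := G (xk k)) hCconv (hyC k) (fun c' hc' => ?_) cc hcc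
      · rw [real_inner_smul_left]
        have hc := (hc0 k).le
        nlinarith
      · rw [← dist_eq_norm, ← dist_eq_norm, ← hydist k]
        exact Metric.infDist_le_dist_of_mem hc'
    · -- the w and the equation
      refine ⟨(a k) • (xk k - p k), ?_, rfl⟩
      apply aux_mem_limNormalCone ?_ (ha0 k).le
      refine ⟨hpD k, fun w hw => ?_⟩
      rw [norm_sub_rev, ← dist_eq_norm, ← hpdist k, norm_sub_rev, ← dist_eq_norm]
      exact Metric.infDist_le_dist_of_mem hw
end
end

section
/- A feasible point (x̄, ȳ) of the decomposed problem (i.e., x̄ = ȳ, G(x̄) ∈ C, ȳ ∈ D) is an AM-stationary point of the decomposed problem if and only if there exist sequences x^k → x̄ in X, y^k → ȳ with y^k ∈ D, ε₁^k → 0 in X, ε₂^k → 0 in X, z^k → 0 in Y, and multipliers λ^k ∈ Y, μ^k ∈ X such that for all k: ε₁^k = ∇f(x^k) + G'(x^k)*λ^k + μ^k, ε₂^k ∈ −μ^k + N_D^lim(y^k), and λ^k ∈ N_C(G(x^k) − z^k). -/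
open Filter Topology RealInnerProductSpace

noncomputable section

variable {X Y : Type*} [NormedAddCommGroup X] [InnerProductSpace ℝ X] [FiniteDimensional ℝ X]
  [NormedAddCommGroup Y] [InnerProductSpace ℝ Y] [FiniteDimensional ℝ Y]

lemma norm_le_norm_iff_sq {E F : Type*} [NormedAddCommGroup E] [NormedAddCommGroup F]
    {a : E} {b : F} : ‖a‖ ≤ ‖b‖ ↔ ‖a‖ ^ 2 ≤ ‖b‖ ^ 2 :=
  (pow_le_pow_iff_left₀ (norm_nonneg _) (norm_nonneg _) two_ne_zero).symm

lemma projSet_prod (D : Set X) (v z : WithLp 2 (X × X)) :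
    z ∈ projSet {p : WithLp 2 (X × X) | p.snd ∈ D} v ↔
      z.fst = v.fst ∧ z.snd ∈ projSet D v.snd := by
  have esub : ∀ a b : WithLp 2 (X × X), (a - b).fst = a.fst - b.fst ∧ (a - b).snd = a.snd - b.snd :=
    fun a b => ⟨rfl, rfl⟩
  constructor
  · rintro ⟨hz, hmin⟩
    have h1 : z.fst = v.fst := by
      have h := hmin ((WithLp.equiv 2 (X × X)).symm (v.fst, z.snd)) hz
      rw [norm_le_norm_iff_sq, WithLp.prod_norm_sq_eq_of_L2, WithLp.prod_norm_sq_eq_of_L2,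
        (esub _ _).1, (esub _ _).2, (esub _ _).1, (esub _ _).2] at h
      have eA : ((WithLp.equiv 2 (X × X)).symm (v.fst, z.snd) : WithLp 2 (X × X)).fst = v.fst := rfl
      have eB : ((WithLp.equiv 2 (X × X)).symm (v.fst, z.snd) : WithLp 2 (X × X)).snd = z.snd := rfl
      rw [eA, eB, sub_self, norm_zero] at h
      have hsq : ‖z.fst - v.fst‖ ^ 2 ≤ 0 := by nlinarith
      have hn : ‖z.fst - v.fst‖ = 0 :=
        le_antisymm (by nlinarith [norm_nonneg (z.fst - v.fst)]) (norm_nonneg _)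
      exact sub_eq_zero.mp (norm_eq_zero.mp hn)
    refine ⟨h1, hz, fun w2 hw2 => ?_⟩
    have h := hmin ((WithLp.equiv 2 (X × X)).symm (v.fst, w2)) hw2
    rw [norm_le_norm_iff_sq, WithLp.prod_norm_sq_eq_of_L2, WithLp.prod_norm_sq_eq_of_L2,
      (esub _ _).1, (esub _ _).2, (esub _ _).1, (esub _ _).2] at h
    have eA : ((WithLp.equiv 2 (X × X)).symm (v.fst, w2) : WithLp 2 (X × X)).fst = v.fst := rfl
    have eB : ((WithLp.equiv 2 (X × X)).symm (v.fst, w2) : WithLp 2 (X × X)).snd = w2 := rfl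
    rw [eA, eB, h1, sub_self, norm_zero] at h
    rw [norm_le_norm_iff_sq]
    nlinarith
  · rintro ⟨h1, hz2, hmin⟩
    refine ⟨hz2, fun w hw => ?_⟩
    rw [norm_le_norm_iff_sq, WithLp.prod_norm_sq_eq_of_L2, WithLp.prod_norm_sq_eq_of_L2,
      (esub _ _).1, (esub _ _).2, (esub _ _).1, (esub _ _).2, h1, sub_self, norm_zero]
    have h := norm_le_norm_iff_sq.mp (hmin w.snd hw)
    nlinarith [norm_nonneg (w.fst - v.fst), sq_nonneg ‖w.fst - v.fst‖]

lemma projSet_nonempty (D : Set X) (hDcl : IsClosed D) (hDne : D.Nonempty) (x : X) :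
    (projSet D x).Nonempty := by
  obtain ⟨y, hy, hyd⟩ := hDcl.exists_infDist_eq_dist hDne x
  refine ⟨y, hy, fun w hw => ?_⟩
  have h1 : dist x y ≤ dist x w := hyd ▸ Metric.infDist_le_dist_of_mem hw
  simpa [dist_eq_norm, norm_sub_rev] using h1

lemma withLp_prod_ext {a b : WithLp 2 (X × X)} (h1 : a.fst = b.fst) (h2 : a.snd = b.snd) : a = b :=
  congrArg (WithLp.toLp 2) (Prod.ext h1 h2)

lemma limNormalCone_prod (D : Set X) (hDcl : IsClosed D) (hDne : D.Nonempty)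
    (q n : WithLp 2 (X × X)) :
    n ∈ limNormalCone {p : WithLp 2 (X × X) | p.snd ∈ D} q ↔
      n.fst = 0 ∧ n.snd ∈ limNormalCone D q.snd := by
  have cfst : Continuous fun p : WithLp 2 (X × X) => p.fst :=
    continuous_fst.comp (WithLp.prod_continuous_ofLp (p := 2) (α := X) (β := X))
  have csnd : Continuous fun p : WithLp 2 (X × X) => p.snd :=
    continuous_snd.comp (WithLp.prod_continuous_ofLp (p := 2) (α := X) (β := X))
  constructor
  · rintro ⟨hq, v, ws, hv, hws, hP⟩
    have hws1 : ∀ j, (ws j).fst = 0 := by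
      intro j
      obtain ⟨t, p, ht, hp, hwj⟩ := hP j
      have hp1 : p.fst = (v j).fst := ((projSet_prod D _ _).mp hp).1
      have : (ws j).fst = t • ((v j).fst - p.fst) := by rw [hwj]; rfl
      rw [this, hp1, sub_self, smul_zero]
    have hn1 : n.fst = 0 := by
      have t1 : Tendsto (fun j => (ws j).fst) atTop (𝓝 n.fst) := (cfst.tendsto n).comp hws
      have t2 : Tendsto (fun j => (ws j).fst) atTop (𝓝 0) := by
        simpa [hws1] using (tendsto_const_nhds : Tendsto (fun _ : ℕ => (0 : X)) atTop (𝓝 0))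
      exact tendsto_nhds_unique t1 t2
    refine ⟨hn1, hq, fun j => (v j).snd, fun j => (ws j).snd,
      (csnd.tendsto q).comp hv, (csnd.tendsto n).comp hws, fun j => ?_⟩
    obtain ⟨t, p, ht, hp, hwj⟩ := hP j
    exact ⟨t, p.snd, ht, ((projSet_prod D _ _).mp hp).2, by show (ws j).snd = t • ((v j).snd - p.snd); rw [hwj]; rfl⟩
  · rintro ⟨hn1, hq2, v, ws, hv, hws, hP⟩
    refine ⟨hq2, fun j => (WithLp.equiv 2 (X × X)).symm (q.fst, v j),
      fun j => (WithLp.equiv 2 (X × X)).symm (0, ws j), ?_, ?_, fun j => ?_⟩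
    · have : Tendsto (fun j => ((q.fst, v j) : X × X)) atTop (𝓝 (q.fst, q.snd)) :=
        tendsto_const_nhds.prodMk_nhds hv
      exact (WithLp.prod_continuous_toLp (p := 2) (α := X) (β := X)).tendsto (q.fst, q.snd) |>.comp this
    · have h0 : Tendsto (fun j => ((0, ws j) : X × X)) atTop (𝓝 (0, n.snd)) :=
        tendsto_const_nhds.prodMk_nhds hws
      have := (WithLp.prod_continuous_toLp (p := 2) (α := X) (β := X)).tendsto (0, n.snd) |>.comp h0
      have hn : ((WithLp.equiv 2 (X × X)).symm (0, n.snd) : WithLp 2 (X × X)) = n :=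
        withLp_prod_ext (by exact hn1.symm) rfl
      rw [← hn]; exact this
    · obtain ⟨t, p, ht, hp, hwj⟩ := hP j
      refine ⟨t, (WithLp.equiv 2 (X × X)).symm (q.fst, p), ht,
        (projSet_prod D _ _).mpr ⟨rfl, hp⟩, withLp_prod_ext ?_ ?_⟩
      · show (0 : X) = t • (q.fst - q.fst); rw [sub_self, smul_zero]
      · show ws j = t • (v j - p); exact hwj

lemma convNormalCone_prod (C : Set Y) (q l : WithLp 2 (Y × X)) :
    l ∈ convNormalCone
        {z : WithLp 2 (Y × X) |
          (WithLp.equiv 2 (Y × X) z).1 ∈ C ∧ (WithLp.equiv 2 (Y × X) z).2 = 0} q ↔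
      q.snd = 0 ∧ l.fst ∈ convNormalCone C q.fst := by
  constructor
  · rintro ⟨⟨hq1, hq2⟩, hmin⟩
    refine ⟨hq2, hq1, fun c1 hc1 => ?_⟩
    have h := hmin ((WithLp.equiv 2 (Y × X)).symm (c1, 0)) ⟨hc1, rfl⟩
    have e : ⟪l, ((WithLp.equiv 2 (Y × X)).symm (c1, 0) : WithLp 2 (Y × X)) - q⟫ =
        ⟪l.fst, c1 - q.fst⟫ + ⟪l.snd, (0 : X) - q.snd⟫ := rfl
    have hq2' : q.snd = 0 := hq2
    rw [e, hq2', sub_zero, inner_zero_right, add_zero] at h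
    exact h
  · rintro ⟨hq2, hq1C, hl1⟩
    refine ⟨⟨hq1C, hq2⟩, fun c hc => ?_⟩
    have e : ⟪l, c - q⟫ = ⟪l.fst, c.fst - q.fst⟫ + ⟪l.snd, c.snd - q.snd⟫ := rfl
    have hc2 : c.snd = 0 := hc.2
    rw [e, hc2, hq2, sub_zero, inner_zero_right, add_zero]
    exact hl1 c.fst hc.1

lemma gradient_comp_fst (f : X → ℝ) (hf : ContDiff ℝ 1 f) (w : WithLp 2 (X × X)) :
    gradient (fun p : WithLp 2 (X × X) => f (WithLp.equiv 2 (X × X) p).1) w =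
      (WithLp.equiv 2 (X × X)).symm (gradient f w.fst, 0) := by
  have hgx : HasGradientAt f (gradient f w.fst) w.fst :=
    ((hf.differentiable one_ne_zero) w.fst).hasGradientAt
  have hfd : HasFDerivAt f (InnerProductSpace.toDual ℝ X (gradient f w.fst)) w.fst :=
    hasGradientAt_iff_hasFDerivAt.mp hgx
  set fstCLM : WithLp 2 (X × X) →L[ℝ] X :=
    (ContinuousLinearMap.fst ℝ X X).comp
      (WithLp.prodContinuousLinearEquiv 2 ℝ X X).toContinuousLinearMap with hfst
  have hc : HasFDerivAt (fun p : WithLp 2 (X × X) => (WithLp.equiv 2 (X × X) p).1) fstCLM w :=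
    fstCLM.hasFDerivAt
  have hcomp := hfd.comp w hc
  have hEq : (InnerProductSpace.toDual ℝ X (gradient f w.fst)).comp fstCLM =
      InnerProductSpace.toDual ℝ (WithLp 2 (X × X))
        ((WithLp.equiv 2 (X × X)).symm (gradient f w.fst, 0)) := by
    apply ContinuousLinearMap.ext
    intro h
    simp only [ContinuousLinearMap.comp_apply, InnerProductSpace.toDual_apply_apply]
    have : ⟪((WithLp.equiv 2 (X × X)).symm (gradient f w.fst, 0) : WithLp 2 (X × X)), h⟫ =
        ⟪gradient f w.fst, h.fst⟫ + ⟪(0 : X), h.snd⟫ := rfl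
    rw [this, inner_zero_left, add_zero]
    rfl
  rw [hEq] at hcomp
  exact (hasGradientAt_iff_hasFDerivAt.mpr hcomp).gradient

def Atilde (G : X → Y) (w : WithLp 2 (X × X)) : WithLp 2 (X × X) →L[ℝ] WithLp 2 (Y × X) :=
  ((WithLp.prodContinuousLinearEquiv 2 ℝ Y X).symm.toContinuousLinearMap.comp
    (((fderiv ℝ G w.fst).comp (ContinuousLinearMap.fst ℝ X X)).prod
      ((ContinuousLinearMap.fst ℝ X X) - (ContinuousLinearMap.snd ℝ X X)))).comp
    (WithLp.prodContinuousLinearEquiv 2 ℝ X X).toContinuousLinearMap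

lemma hasFDerivAt_Gtilde (G : X → Y) (hG : ContDiff ℝ 1 G) (w : WithLp 2 (X × X)) :
    HasFDerivAt (fun p : WithLp 2 (X × X) =>
        (WithLp.equiv 2 (Y × X)).symm
          (G (WithLp.equiv 2 (X × X) p).1,
            (WithLp.equiv 2 (X × X) p).1 - (WithLp.equiv 2 (X × X) p).2))
      (Atilde G w) w := by
  have hGd : HasFDerivAt G (fderiv ℝ G w.fst) w.fst :=
    ((hG.differentiable one_ne_zero) w.fst).hasFDerivAt
  have h1 : HasFDerivAt (fun p : X × X => (G p.fst, p.fst - p.snd))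
      (((fderiv ℝ G w.fst).comp (ContinuousLinearMap.fst ℝ X X)).prod
        ((ContinuousLinearMap.fst ℝ X X) - (ContinuousLinearMap.snd ℝ X X)))
      (WithLp.equiv 2 (X × X) w) := by
    exact HasFDerivAt.prodMk (hGd.comp (WithLp.equiv 2 (X × X) w)
        (hasFDerivAt_fst (p := WithLp.equiv 2 (X × X) w)))
      ((ContinuousLinearMap.fst ℝ X X - ContinuousLinearMap.snd ℝ X X).hasFDerivAt
        (x := WithLp.equiv 2 (X × X) w))
  have h2 := h1.comp w
    ((WithLp.prodContinuousLinearEquiv 2 ℝ X X).toContinuousLinearMap.hasFDerivAt)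
  have h3 := ((WithLp.prodContinuousLinearEquiv 2 ℝ Y X).symm.toContinuousLinearMap.hasFDerivAt).comp w h2
  rw [← ContinuousLinearMap.comp_assoc] at h3
  exact h3

lemma adjoint_Atilde (G : X → Y) (w : WithLp 2 (X × X)) (l : WithLp 2 (Y × X)) :
    ContinuousLinearMap.adjoint (Atilde G w) l =
      (WithLp.equiv 2 (X × X)).symm
        ((ContinuousLinearMap.adjoint (fderiv ℝ G w.fst)) l.fst + l.snd, -l.snd) := by
  apply ext_inner_right ℝ
  intro h
  rw [ContinuousLinearMap.adjoint_inner_left]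
  have e1 : ⟪((WithLp.equiv 2 (X × X)).symm
      ((ContinuousLinearMap.adjoint (fderiv ℝ G w.fst)) l.fst + l.snd, -l.snd) : WithLp 2 (X × X)), h⟫ =
      ⟪(ContinuousLinearMap.adjoint (fderiv ℝ G w.fst)) l.fst + l.snd, h.fst⟫ + ⟪-l.snd, h.snd⟫ := rfl
  have e2 : ⟪l, Atilde G w h⟫ =
      ⟪l.fst, fderiv ℝ G w.fst h.fst⟫ + ⟪l.snd, h.fst - h.snd⟫ := rfl
  rw [e1, e2, inner_add_left, ContinuousLinearMap.adjoint_inner_left, inner_sub_right,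
    inner_neg_left]
  ring

/-- characterization of AM-stationary points of the decomposed problem
`min f(x) s.t. x - y = 0, G(x) ∈ C, y ∈ D`, written in the abstract form (P) with data
`f̃(x,y) = f(x)`, `G̃(x,y) = (G(x), x - y)`, `C̃ = C × {0}`, `D̃ = X × D` (with the ℓ²
product structure), in terms of the component sequences. -/
theorem AM_stationary_decomposed_iff_componentwise
    (f : X → ℝ) (G : X → Y) (C : Set Y) (D : Set X)
    (hf : ContDiff ℝ 1 f) (hG : ContDiff ℝ 1 G)
    (hCne : C.Nonempty) (hCcl : IsClosed C) (hCconv : Convex ℝ C)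
    (hDne : D.Nonempty) (hDcl : IsClosed D)
    (xb yb : X) (hfeas : xb = yb ∧ G xb ∈ C ∧ yb ∈ D) :
    (∃ (w εt : ℕ → WithLp 2 (X × X)) (zt lamt : ℕ → WithLp 2 (Y × X)),
      Tendsto w atTop (𝓝 ((WithLp.equiv 2 (X × X)).symm (xb, yb))) ∧
      Tendsto εt atTop (𝓝 0) ∧ Tendsto zt atTop (𝓝 0) ∧
      ∀ k,
        lamt k ∈ convNormalCone
            {z : WithLp 2 (Y × X) |
              (WithLp.equiv 2 (Y × X) z).1 ∈ C ∧ (WithLp.equiv 2 (Y × X) z).2 = 0}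
            ((WithLp.equiv 2 (Y × X)).symm
              (G (WithLp.equiv 2 (X × X) (w k)).1,
                (WithLp.equiv 2 (X × X) (w k)).1 - (WithLp.equiv 2 (X × X) (w k)).2)
              - zt k) ∧
        ∃ nv ∈ limNormalCone
            {p : WithLp 2 (X × X) | (WithLp.equiv 2 (X × X) p).2 ∈ D} (w k),
          εt k =
            gradient (fun p : WithLp 2 (X × X) => f (WithLp.equiv 2 (X × X) p).1) (w k) +
            ContinuousLinearMap.adjoint
              (fderiv ℝ (fun p : WithLp 2 (X × X) =>
                (WithLp.equiv 2 (Y × X)).symm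
                  (G (WithLp.equiv 2 (X × X) p).1,
                    (WithLp.equiv 2 (X × X) p).1 - (WithLp.equiv 2 (X × X) p).2)) (w k))
              (lamt k) + nv)
    ↔
    (∃ (xs ys ε1 ε2 : ℕ → X) (zs lam : ℕ → Y) (mu : ℕ → X),
      Tendsto xs atTop (𝓝 xb) ∧ Tendsto ys atTop (𝓝 yb) ∧ (∀ k, ys k ∈ D) ∧
      Tendsto ε1 atTop (𝓝 0) ∧ Tendsto ε2 atTop (𝓝 0) ∧ Tendsto zs atTop (𝓝 0) ∧
      ∀ k,
        ε1 k = gradient f (xs k) +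
          ContinuousLinearMap.adjoint (fderiv ℝ G (xs k)) (lam k) + mu k ∧
        (∃ nv ∈ limNormalCone D (ys k), ε2 k = -(mu k) + nv) ∧
        lam k ∈ convNormalCone C (G (xs k) - zs k)) := by
  have cfst : Continuous fun p : WithLp 2 (X × X) => p.fst :=
    continuous_fst.comp (WithLp.prod_continuous_ofLp (p := 2) (α := X) (β := X))
  have csnd : Continuous fun p : WithLp 2 (X × X) => p.snd :=
    continuous_snd.comp (WithLp.prod_continuous_ofLp (p := 2) (α := X) (β := X))
  have cfstY : Continuous fun p : WithLp 2 (Y × X) => p.fst :=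
    continuous_fst.comp (WithLp.prod_continuous_ofLp (p := 2) (α := Y) (β := X))
  constructor
  · rintro ⟨w, εt, zt, lamt, hw, hεt, hzt, hk⟩
    refine ⟨fun k => (w k).fst, fun k => (w k).snd, fun k => (εt k).fst, fun k => (εt k).snd,
      fun k => (zt k).fst, fun k => (lamt k).fst, fun k => (lamt k).snd,
      (cfst.tendsto _).comp hw, (csnd.tendsto _).comp hw, ?_,
      (cfst.tendsto _).comp hεt, (csnd.tendsto _).comp hεt,
      (cfstY.tendsto _).comp hzt, ?_⟩
    · intro k
      obtain ⟨-, nv, hnv, -⟩ := hk k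
      exact ((limNormalCone_prod D hDcl hDne (w k) nv).mp hnv).2.1
    · intro k
      obtain ⟨hlam, nv, hnv, heq⟩ := hk k
      obtain ⟨hnv1, hnv2⟩ := (limNormalCone_prod D hDcl hDne (w k) nv).mp hnv
      rw [gradient_comp_fst f hf (w k), (hasFDerivAt_Gtilde G hG (w k)).fderiv,
        adjoint_Atilde G (w k) (lamt k)] at heq
      refine ⟨?_, ⟨nv.snd, hnv2, ?_⟩, ?_⟩
      · have e1 : (εt k).fst = gradient f (w k).fst +
            (ContinuousLinearMap.adjoint (fderiv ℝ G (w k).fst) (lamt k).fst + (lamt k).snd) +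
            nv.fst := congrArg (fun a : WithLp 2 (X × X) => a.fst) heq
        rw [hnv1, add_zero, ← add_assoc] at e1
        exact e1
      · have e2 : (εt k).snd = (0 : X) + (-(lamt k).snd) + nv.snd :=
          congrArg (fun a : WithLp 2 (X × X) => a.snd) heq
        rw [zero_add] at e2
        exact e2
      · exact ((convNormalCone_prod C _ (lamt k)).mp hlam).2
  · rintro ⟨xs, ys, ε1, ε2, zs, lam, mu, hxs, hys, hysD, hε1, hε2, hzs, hk⟩
    choose nv hnvmem hnveq using fun k => (hk k).2.1
    refine ⟨fun k => (WithLp.equiv 2 (X × X)).symm (xs k, ys k),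
      fun k => (WithLp.equiv 2 (X × X)).symm (ε1 k, ε2 k),
      fun k => (WithLp.equiv 2 (Y × X)).symm (zs k, xs k - ys k),
      fun k => (WithLp.equiv 2 (Y × X)).symm (lam k, mu k), ?_, ?_, ?_, ?_⟩
    · exact ((WithLp.prod_continuous_toLp (p := 2) (α := X) (β := X)).tendsto (xb, yb)).comp
        (hxs.prodMk_nhds hys)
    · exact ((WithLp.prod_continuous_toLp (p := 2) (α := X) (β := X)).tendsto (0, 0)).comp
        (hε1.prodMk_nhds hε2)
    · have h0 : Tendsto (fun k => xs k - ys k) atTop (𝓝 0) := by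
        have := hxs.sub hys
        rwa [hfeas.1, sub_self] at this
      exact ((WithLp.prod_continuous_toLp (p := 2) (α := Y) (β := X)).tendsto (0, 0)).comp
        (hzs.prodMk_nhds h0)
    · intro k
      refine ⟨(convNormalCone_prod C _ _).mpr ⟨sub_self _, (hk k).2.2⟩,
        (WithLp.equiv 2 (X × X)).symm (0, nv k),
        (limNormalCone_prod D hDcl hDne _ _).mpr ⟨rfl, hnvmem k⟩, ?_⟩
      rw [gradient_comp_fst f hf, (hasFDerivAt_Gtilde G hG _).fderiv, adjoint_Atilde]
      refine withLp_prod_ext ?_ ?_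
      · show ε1 k = gradient f (xs k) +
          (ContinuousLinearMap.adjoint (fderiv ℝ G (xs k)) (lam k) + mu k) + 0
        rw [add_zero, ← add_assoc]
        exact (hk k).1
      · show ε2 k = 0 + (-(mu k)) + nv k
        rw [zero_add]
        exact hnveq k
end
end

section
/- Let X ∈ ℝ^{m×n} with singular value decomposition X = U Σ Vᵀ, where U ∈ ℝ^{m×m} and V ∈ ℝ^{n×n} are orthogonal and Σ ∈ ℝ^{m×n} is diagonal with Σ_{ii} = σ_i ≥ 0 in nonincreasing order (σ_i ≥ σ_j for i ≤ j, i,j ≤ q := min(m,n)). For κ ≤ q − 1, let Σ̂ be obtained from Σ by setting Σ̂_{ii} = σ_i for i ≤ κ and all other entries to zero, and set X̂ = U Σ̂ Vᵀ. Then X̂ is a projection of X onto D = {Z ∈ ℝ^{m×n} : rank(Z) ≤ κ} with respect to the Frobenius norm; i.e., rank(X̂) ≤ κ and ‖X̂ − X‖_F ≤ ‖Z − X‖_F for every Z ∈ ℝ^{m×n} with rank(Z) ≤ κ. -/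
noncomputable section

open Matrix

set_option maxHeartbeats 1000000
open Finset Module

/-- The Frobenius norm of a real matrix. -/
def frobNorm {m n : ℕ} (A : Matrix (Fin m) (Fin n) ℝ) : ℝ :=
  Real.sqrt (∑ i, ∑ j, A i j ^ 2)

noncomputable section

lemma fsq_trace {m n : ℕ} (A : Matrix (Fin m) (Fin n) ℝ) :
    ∑ i, ∑ j, A i j ^ 2 = Matrix.trace (Aᵀ * A) := by
  simp [Matrix.trace, Matrix.mul_apply, Matrix.diag, sq]
  exact Finset.sum_comm

lemma fsq_conj {m n : ℕ} (U : Matrix (Fin m) (Fin m) ℝ) (V : Matrix (Fin n) (Fin n) ℝ)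
    (hU : Uᵀ * U = 1) (hV : Vᵀ * V = 1) (M : Matrix (Fin m) (Fin n) ℝ) :
    ∑ i, ∑ j, (U * M * Vᵀ) i j ^ 2 = ∑ i, ∑ j, M i j ^ 2 := by
  rw [fsq_trace, fsq_trace]
  have h1 : (U * M * Vᵀ)ᵀ * (U * M * Vᵀ) = V * (Mᵀ * (M * Vᵀ)) := by
    simp only [Matrix.transpose_mul, Matrix.transpose_transpose, Matrix.mul_assoc]
    rw [← Matrix.mul_assoc Uᵀ U, hU, Matrix.one_mul]
  rw [h1, Matrix.trace_mul_comm]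
  simp only [Matrix.mul_assoc]
  rw [hV, Matrix.mul_one]

lemma enorm_sq {m : ℕ} (x : EuclideanSpace ℝ (Fin m)) : ‖x‖ ^ 2 = ∑ i, x i ^ 2 := by
  rw [← real_inner_self_eq_norm_sq, PiLp.inner_apply]
  simp [sq]

lemma orthogonalProjection_inner_eq_zero {m : ℕ} {C : Submodule ℝ (EuclideanSpace ℝ (Fin m))}
    (v : EuclideanSpace ℝ (Fin m)) :
    ∀ w ∈ C, inner ℝ (v - (Submodule.orthogonalProjectionOnto C v : EuclideanSpace ℝ (Fin m))) w = 0 :=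
  fun w hw => Submodule.starProjection_inner_eq_zero v w hw

lemma proj_min {m : ℕ} (C : Submodule ℝ (EuclideanSpace ℝ (Fin m))) (u w : EuclideanSpace ℝ (Fin m))
    (hw : w ∈ C) :
    ‖u - (Submodule.orthogonalProjectionOnto C u : EuclideanSpace ℝ (Fin m))‖ ^ 2 ≤ ‖u - w‖ ^ 2 := by
  have hmem : ((Submodule.orthogonalProjectionOnto C u : EuclideanSpace ℝ (Fin m)) - w) ∈ C :=
    Submodule.sub_mem _ (Submodule.coe_mem _) hw
  have hperp := orthogonalProjection_inner_eq_zero u _ hmem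
  have h : u - w = (u - (Submodule.orthogonalProjectionOnto C u : EuclideanSpace ℝ (Fin m))) +
      ((Submodule.orthogonalProjectionOnto C u : EuclideanSpace ℝ (Fin m)) - w) := by abel
  rw [h, norm_add_sq_real, hperp]
  nlinarith [sq_nonneg ‖(Submodule.orthogonalProjectionOnto C u : EuclideanSpace ℝ (Fin m)) - w‖]

lemma proj_pyth {m : ℕ} (C : Submodule ℝ (EuclideanSpace ℝ (Fin m))) (u : EuclideanSpace ℝ (Fin m)) :
    ‖u - (Submodule.orthogonalProjectionOnto C u : EuclideanSpace ℝ (Fin m))‖ ^ 2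
      + ‖(Submodule.orthogonalProjectionOnto C u : EuclideanSpace ℝ (Fin m))‖ ^ 2 = ‖u‖ ^ 2 := by
  have hperp := orthogonalProjection_inner_eq_zero u _
    (Submodule.coe_mem (Submodule.orthogonalProjectionOnto C u))
  have h : u = (u - (Submodule.orthogonalProjectionOnto C u : EuclideanSpace ℝ (Fin m))) +
      (Submodule.orthogonalProjectionOnto C u : EuclideanSpace ℝ (Fin m)) := by abel
  conv_rhs => rw [h]
  rw [norm_add_sq_real, hperp]
  ring

-- rank of W equals finrank of column space viewed in EuclideanSpace
example {m n : ℕ} (W : Matrix (Fin m) (Fin n) ℝ) :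
    finrank ℝ (LinearMap.range
      ((WithLp.linearEquiv 2 ℝ (Fin m → ℝ)).symm.toLinearMap ∘ₗ W.mulVecLin)) = W.rank := by
  rw [LinearMap.range_comp, LinearEquiv.finrank_map_eq]
  rfl

lemma proj_trace {m : ℕ} (C : Submodule ℝ (EuclideanSpace ℝ (Fin m))) :
    ∑ i : Fin m, ‖(Submodule.orthogonalProjectionOnto C (EuclideanSpace.single i 1) :
      EuclideanSpace ℝ (Fin m))‖ ^ 2 = (finrank ℝ C : ℝ) := by
  set b := stdOrthonormalBasis ℝ C with hb
  have hON : Orthonormal ℝ (fun k => ((b k : EuclideanSpace ℝ (Fin m)))) := by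
    have := b.orthonormal
    rw [orthonormal_iff_ite] at this ⊢
    intro i j
    simpa [Submodule.coe_inner] using this i j
  have hnorm : ∀ (x : EuclideanSpace ℝ (Fin m)),
      ‖(Submodule.orthogonalProjectionOnto C x : EuclideanSpace ℝ (Fin m))‖ ^ 2
        = ∑ k, (inner ℝ ((b k : EuclideanSpace ℝ (Fin m))) x : ℝ) ^ 2 := by
    intro x
    have h1 := b.orthogonalProjectionOnto_apply_eq_sum x
    have h2 : (Submodule.orthogonalProjectionOnto C x : EuclideanSpace ℝ (Fin m))
        = ∑ k, (inner ℝ ((b k : EuclideanSpace ℝ (Fin m))) x : ℝ) • (b k : EuclideanSpace ℝ (Fin m)) := by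
      rw [h1]; push_cast [Submodule.coe_sum]; rfl
    rw [h2, ← real_inner_self_eq_norm_sq, hON.inner_sum]
    simp [sq]
  calc ∑ i : Fin m, ‖(Submodule.orthogonalProjectionOnto C (EuclideanSpace.single i 1) :
        EuclideanSpace ℝ (Fin m))‖ ^ 2
      = ∑ i : Fin m, ∑ k, (inner ℝ ((b k : EuclideanSpace ℝ (Fin m)))
          (EuclideanSpace.single i 1) : ℝ) ^ 2 := by
        exact Finset.sum_congr rfl fun i _ => hnorm _
    _ = ∑ k, ∑ i : Fin m, ((b k : EuclideanSpace ℝ (Fin m)) i) ^ 2 := by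
        rw [Finset.sum_comm]
        refine Finset.sum_congr rfl fun k _ => Finset.sum_congr rfl fun i _ => ?_
        congr 1
        simp [EuclideanSpace.inner_single_right]
    _ = ∑ _k : Fin (finrank ℝ C), (1:ℝ) := by
        refine Finset.sum_congr rfl fun k _ => ?_
        have h1 : ‖(b k : EuclideanSpace ℝ (Fin m))‖ = 1 := hON.1 k
        have h2 : ‖(b k : EuclideanSpace ℝ (Fin m))‖ ^ 2
            = ∑ i, ((b k : EuclideanSpace ℝ (Fin m)) i) ^ 2 := enorm_sq _
        rw [← h2, h1]; norm_num
    _ = (finrank ℝ C : ℝ) := by simp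

lemma scalar_ineq (q κ : ℕ) (hκ : κ ≤ q) (a p : ℕ → ℝ)
    (ha0 : ∀ j, j < q → 0 ≤ a j) (hmono : ∀ i j, i ≤ j → j < q → a j ≤ a i)
    (hp0 : ∀ j, 0 ≤ p j) (hp1 : ∀ j, p j ≤ 1)
    (hps : ∑ j ∈ Finset.range q, p j ≤ (κ : ℝ)) :
    ∑ j ∈ Finset.range q, a j * p j ≤ ∑ j ∈ Finset.range κ, a j := by
  rcases eq_or_lt_of_le hκ with rfl | hlt
  · refine Finset.sum_le_sum fun j hj => ?_
    have := ha0 j (Finset.mem_range.mp hj)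
    nlinarith [hp1 j, hp0 j]
  · have hsplit : ∑ j ∈ Finset.range q, a j * p j
        = ∑ j ∈ Finset.range κ, a j * p j + ∑ j ∈ Finset.Ico κ q, a j * p j := by
      rw [Finset.range_eq_Ico, Finset.range_eq_Ico, ← Finset.sum_Ico_consecutive _ (Nat.zero_le κ) hκ]
    have hpsplit : ∑ j ∈ Finset.range q, p j
        = ∑ j ∈ Finset.range κ, p j + ∑ j ∈ Finset.Ico κ q, p j := by
      rw [Finset.range_eq_Ico, Finset.range_eq_Ico, ← Finset.sum_Ico_consecutive _ (Nat.zero_le κ) hκ]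
    have haκ : 0 ≤ a κ := ha0 κ hlt
    have h1 : ∑ j ∈ Finset.Ico κ q, a j * p j ≤ a κ * ∑ j ∈ Finset.Ico κ q, p j := by
      rw [Finset.mul_sum]
      refine Finset.sum_le_sum fun j hj => ?_
      obtain ⟨hj1, hj2⟩ := Finset.mem_Ico.mp hj
      exact mul_le_mul_of_nonneg_right (hmono κ j hj1 hj2) (hp0 j)
    have h2 : ∑ j ∈ Finset.Ico κ q, p j ≤ ∑ j ∈ Finset.range κ, (1 - p j) := by
      have : ∑ j ∈ Finset.range κ, (1 - p j) = κ - ∑ j ∈ Finset.range κ, p j := by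
        rw [Finset.sum_sub_distrib]; simp
      rw [this]; rw [hpsplit] at hps; linarith
    have h3 : a κ * ∑ j ∈ Finset.range κ, (1 - p j) ≤ ∑ j ∈ Finset.range κ, a j * (1 - p j) := by
      rw [Finset.mul_sum]
      refine Finset.sum_le_sum fun j hj => ?_
      have hj' := Finset.mem_range.mp hj
      exact mul_le_mul_of_nonneg_right (hmono j κ (le_of_lt hj') hlt) (by linarith [hp1 j])
    have h4 : a κ * ∑ j ∈ Finset.Ico κ q, p j ≤ a κ * ∑ j ∈ Finset.range κ, (1 - p j) :=
      mul_le_mul_of_nonneg_left h2 haκ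
    have h5 : ∑ j ∈ Finset.range κ, a j * p j + ∑ j ∈ Finset.range κ, a j * (1 - p j)
        = ∑ j ∈ Finset.range κ, a j := by
      rw [← Finset.sum_add_distrib]; congr 1; ext j; ring
    linarith

lemma key {m n : ℕ} (κ : ℕ) (hκ : κ ≤ min m n) (σ : ℕ → ℝ)
    (hσnn : ∀ i, i < min m n → 0 ≤ σ i)
    (hσord : ∀ i j, i ≤ j → j < min m n → σ j ≤ σ i)
    (S : Matrix (Fin m) (Fin n) ℝ)
    (hS : ∀ i j, S i j = if (i : ℕ) = (j : ℕ) then σ (i : ℕ) else 0)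
    (W : Matrix (Fin m) (Fin n) ℝ) (hW : W.rank ≤ κ) :
    ∑ k ∈ Finset.Ico κ (min m n), σ k ^ 2 ≤ ∑ i, ∑ j, (W i j - S i j) ^ 2 := by
  set q := min m n with hq
  have hqm : q ≤ m := min_le_left m n
  have hqn : q ≤ n := min_le_right m n
  set L : (Fin n → ℝ) →ₗ[ℝ] EuclideanSpace ℝ (Fin m) :=
    (WithLp.linearEquiv 2 ℝ (Fin m → ℝ)).symm.toLinearMap ∘ₗ W.mulVecLin with hL
  set C : Submodule ℝ (EuclideanSpace ℝ (Fin m)) := LinearMap.range L with hC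
  have hfinC : (finrank ℝ C : ℝ) ≤ (κ : ℝ) := by
    have h : finrank ℝ C = W.rank := by
      rw [hC, hL, LinearMap.range_comp, LinearEquiv.finrank_map_eq]; rfl
    rw [h]; exact_mod_cast hW
  set colW : Fin n → EuclideanSpace ℝ (Fin m) := fun j => L (Pi.single j 1) with hcolW
  have hcolW_mem : ∀ j, colW j ∈ C := fun j => ⟨Pi.single j 1, rfl⟩
  have hcolW_apply : ∀ j i, colW j i = W i j := by
    intro j i
    simp [hcolW, hL, Matrix.mulVecLin_apply]
  set colS : Fin n → EuclideanSpace ℝ (Fin m) :=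
    fun j => (WithLp.equiv 2 (Fin m → ℝ)).symm (fun i => S i j) with hcolS
  have hcolS_apply : ∀ j i, colS j i = S i j := fun j i => rfl
  set pfun : ℕ → ℝ := fun k =>
    if h : k < m then ‖(Submodule.orthogonalProjectionOnto C (EuclideanSpace.single (⟨k, h⟩ : Fin m) 1) :
      EuclideanSpace ℝ (Fin m))‖ ^ 2 else 0 with hpfun
  have hp0 : ∀ k, 0 ≤ pfun k := by intro k; simp only [hpfun]; split <;> positivity
  have hp1 : ∀ k, pfun k ≤ 1 := by
    intro k; simp only [hpfun]; split
    case isTrue h =>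
      have h1 := proj_pyth C (EuclideanSpace.single (⟨k, h⟩ : Fin m) 1)
      have h2 : ‖(EuclideanSpace.single (⟨k, h⟩ : Fin m) (1:ℝ))‖ = 1 := by
        rw [EuclideanSpace.norm_single]; norm_num
      rw [h2] at h1
      nlinarith [sq_nonneg ‖(EuclideanSpace.single (⟨k, h⟩ : Fin m) (1:ℝ)) -
        (Submodule.orthogonalProjectionOnto C (EuclideanSpace.single (⟨k, h⟩ : Fin m) 1) :
          EuclideanSpace ℝ (Fin m))‖]
    case isFalse => norm_num
  have hps : ∑ k ∈ Finset.range q, pfun k ≤ (κ : ℝ) := by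
    have hsub : ∑ k ∈ Finset.range q, pfun k ≤ ∑ k ∈ Finset.range m, pfun k :=
      Finset.sum_le_sum_of_subset_of_nonneg
        (Finset.range_subset_range.mpr hqm) (fun k _ _ => hp0 k)
    have heq : ∑ k ∈ Finset.range m, pfun k
        = ∑ i : Fin m, ‖(Submodule.orthogonalProjectionOnto C (EuclideanSpace.single i 1) :
            EuclideanSpace ℝ (Fin m))‖ ^ 2 := by
      rw [← Fin.sum_univ_eq_sum_range]
      refine Finset.sum_congr rfl fun i _ => ?_
      simp only [hpfun]
      rw [dif_pos i.isLt]
    rw [heq, proj_trace] at hsub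
    exact le_trans hsub hfinC
  -- per-column inequality
  have hcol : ∀ j : Fin n,
      (if (j : ℕ) < q then σ (j : ℕ) ^ 2 * (1 - pfun (j : ℕ)) else 0)
        ≤ ∑ i, (W i j - S i j) ^ 2 := by
    intro j
    have hsum : ∑ i, (W i j - S i j) ^ 2 = ‖colS j - colW j‖ ^ 2 := by
      rw [enorm_sq]
      refine Finset.sum_congr rfl fun i _ => ?_
      have h : (colS j - colW j) i = S i j - W i j := by
        simp [hcolS_apply, hcolW_apply]
      rw [h]; ring
    rw [hsum]
    have h1 := proj_min C (colS j) (colW j) (hcolW_mem j)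
    have h2 := proj_pyth C (colS j)
    split
    case isTrue hjq =>
      have hjm : (j : ℕ) < m := lt_of_lt_of_le hjq hqm
      have hcs : colS j = σ (j : ℕ) • EuclideanSpace.single (⟨(j : ℕ), hjm⟩ : Fin m) 1 := by
        ext i
        show colS j i = _
        rw [hcolS_apply, hS]
        show _ = σ (j:ℕ) * (EuclideanSpace.single (⟨(j : ℕ), hjm⟩ : Fin m) (1:ℝ)) i
        rw [EuclideanSpace.single_apply]
        by_cases hij : (i : ℕ) = (j : ℕ)
        · have : i = (⟨(j : ℕ), hjm⟩ : Fin m) := by ext; exact hij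
          rw [if_pos hij, if_pos this, hij]; ring
        · have : i ≠ (⟨(j : ℕ), hjm⟩ : Fin m) := by
            intro hcon; apply hij; rw [hcon]
          rw [if_neg hij, if_neg this]; ring
      have hnS : ‖colS j‖ ^ 2 = σ (j : ℕ) ^ 2 := by
        rw [hcs, norm_smul, EuclideanSpace.norm_single]
        simp [mul_pow, sq_abs]
      have hPS : ‖(Submodule.orthogonalProjectionOnto C (colS j) : EuclideanSpace ℝ (Fin m))‖ ^ 2
          = σ (j : ℕ) ^ 2 * pfun (j : ℕ) := by
        rw [hcs, _root_.map_smul]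
        have : ((σ (j:ℕ) • Submodule.orthogonalProjectionOnto C (EuclideanSpace.single (⟨(j : ℕ), hjm⟩ : Fin m) 1) : C) :
            EuclideanSpace ℝ (Fin m)) = σ (j:ℕ) • (Submodule.orthogonalProjectionOnto C
              (EuclideanSpace.single (⟨(j : ℕ), hjm⟩ : Fin m) 1) : EuclideanSpace ℝ (Fin m)) := rfl
        rw [this, norm_smul]
        simp only [hpfun]
        rw [dif_pos hjm]
        simp [mul_pow, sq_abs]
      rw [hnS, hPS] at h2
      nlinarith [h1, h2]
    case isFalse => positivity
  -- assemble
  have hswap : ∑ i, ∑ j, (W i j - S i j) ^ 2 = ∑ j : Fin n, ∑ i, (W i j - S i j) ^ 2 :=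
    Finset.sum_comm
  have hlow : ∑ k ∈ Finset.range q, σ k ^ 2 * (1 - pfun k)
      ≤ ∑ j : Fin n, ∑ i, (W i j - S i j) ^ 2 := by
    have h1 : ∑ j : Fin n, (if (j : ℕ) < q then σ (j : ℕ) ^ 2 * (1 - pfun (j : ℕ)) else 0)
        ≤ ∑ j : Fin n, ∑ i, (W i j - S i j) ^ 2 := Finset.sum_le_sum fun j _ => hcol j
    have h2 : ∑ j : Fin n, (if (j : ℕ) < q then σ (j : ℕ) ^ 2 * (1 - pfun (j : ℕ)) else 0)
        = ∑ k ∈ Finset.range q, σ k ^ 2 * (1 - pfun k) := by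
      rw [Fin.sum_univ_eq_sum_range (fun k => if k < q then σ k ^ 2 * (1 - pfun k) else 0) n]
      rw [← Finset.sum_filter]
      congr 1
      ext k
      simp only [Finset.mem_filter, Finset.mem_range]
      omega
    rw [h2] at h1; exact h1
  have hscal : ∑ k ∈ Finset.range q, σ k ^ 2 * pfun k ≤ ∑ k ∈ Finset.range κ, σ k ^ 2 := by
    refine scalar_ineq q κ hκ (fun k => σ k ^ 2) pfun (fun k _ => sq_nonneg _) ?_ hp0 hp1 hps
    intro i j hij hj
    have h0 : 0 ≤ σ j := hσnn j hj
    have h1 : σ j ≤ σ i := hσord i j hij hj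
    show σ j ^ 2 ≤ σ i ^ 2
    exact pow_le_pow_left₀ h0 h1 2
  have hfinal : ∑ k ∈ Finset.Ico κ q, σ k ^ 2
      ≤ ∑ k ∈ Finset.range q, σ k ^ 2 * (1 - pfun k) := by
    have e1 : ∑ k ∈ Finset.range q, σ k ^ 2 * (1 - pfun k)
        = ∑ k ∈ Finset.range q, σ k ^ 2 - ∑ k ∈ Finset.range q, σ k ^ 2 * pfun k := by
      rw [← Finset.sum_sub_distrib]
      exact Finset.sum_congr rfl fun k _ => by ring
    have e2 : ∑ k ∈ Finset.Ico κ q, σ k ^ 2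
        = ∑ k ∈ Finset.range q, σ k ^ 2 - ∑ k ∈ Finset.range κ, σ k ^ 2 := by
      rw [Finset.sum_Ico_eq_sub _ hκ]
    rw [e1, e2]
    linarith
  rw [hswap]
  exact le_trans hfinal hlow


lemma sum_diag_sq {m n : ℕ} (f : ℕ → ℝ) :
    ∑ i : Fin m, ∑ j : Fin n, (if (i : ℕ) = (j : ℕ) then f (i : ℕ) else 0) ^ 2
      = ∑ k ∈ Finset.range (min m n), f k ^ 2 := by
  have hinner : ∀ i : Fin m, ∑ j : Fin n, (if (i : ℕ) = (j : ℕ) then f (i : ℕ) else 0) ^ 2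
      = if (i : ℕ) < n then f (i : ℕ) ^ 2 else 0 := by
    intro i
    have h1 : ∀ j : Fin n, (if (i : ℕ) = (j : ℕ) then f (i : ℕ) else 0) ^ 2
        = if (i : ℕ) = (j : ℕ) then f (i : ℕ) ^ 2 else 0 := by
      intro j; split <;> simp
    rw [Finset.sum_congr rfl fun j _ => h1 j]
    rw [Fin.sum_univ_eq_sum_range (fun k => if (i : ℕ) = k then f (i : ℕ) ^ 2 else 0) n]
    rw [Finset.sum_ite_eq (Finset.range n) (i : ℕ) (fun _ => f (i : ℕ) ^ 2)]
    simp
  rw [Finset.sum_congr rfl fun i _ => hinner i]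
  rw [Fin.sum_univ_eq_sum_range (fun k => if k < n then f k ^ 2 else 0) m]
  rw [← Finset.sum_filter]
  congr 1
  ext k
  simp only [Finset.mem_filter, Finset.mem_range, lt_min_iff]

/-- truncating the SVD of `A = U Σ Vᵀ` to its `κ` largest singular values
yields a Frobenius-norm projection of `A` onto the set of matrices of rank at most `κ`
(Eckart–Young). -/
theorem svd_truncation_is_lowrank_projection
    {m n : ℕ} (κ : ℕ) (hκ : κ ≤ min m n - 1)
    (U : Matrix (Fin m) (Fin m) ℝ) (V : Matrix (Fin n) (Fin n) ℝ)
    (hU : U * Uᵀ = 1 ∧ Uᵀ * U = 1) (hV : V * Vᵀ = 1 ∧ Vᵀ * V = 1)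
    (σ : ℕ → ℝ)
    (hσnn : ∀ i, i < min m n → 0 ≤ σ i)
    (hσord : ∀ i j, i ≤ j → j < min m n → σ j ≤ σ i)
    (S : Matrix (Fin m) (Fin n) ℝ)
    (hS : ∀ i j, S i j = if (i : ℕ) = (j : ℕ) then σ (i : ℕ) else 0)
    (Shat : Matrix (Fin m) (Fin n) ℝ)
    (hShat : ∀ i j, Shat i j = if (i : ℕ) = (j : ℕ) ∧ (i : ℕ) < κ then σ (i : ℕ) else 0)
    (A : Matrix (Fin m) (Fin n) ℝ) (hA : A = U * S * Vᵀ) :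
    (U * Shat * Vᵀ).rank ≤ κ ∧
      ∀ Z : Matrix (Fin m) (Fin n) ℝ, Z.rank ≤ κ →
        frobNorm (U * Shat * Vᵀ - A) ≤ frobNorm (Z - A) := by
  obtain ⟨hU1, hU2⟩ := hU
  obtain ⟨hV1, hV2⟩ := hV
  have hκ' : κ ≤ min m n := le_trans hκ (Nat.sub_le _ _)
  constructor
  · -- rank bound
    have hfac : Shat = (Matrix.of fun (i : Fin m) (k : Fin κ) =>
          if (i : ℕ) = (k : ℕ) then σ (i : ℕ) else 0) *
        (Matrix.of fun (k : Fin κ) (j : Fin n) => if (k : ℕ) = (j : ℕ) then (1 : ℝ) else 0) := by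
      ext i j
      rw [hShat, Matrix.mul_apply]
      by_cases h : (i : ℕ) = (j : ℕ) ∧ (i : ℕ) < κ
      · obtain ⟨h1, h2⟩ := h
        rw [if_pos ⟨h1, h2⟩]
        rw [Finset.sum_eq_single (⟨(i : ℕ), h2⟩ : Fin κ)]
        · simp [Matrix.of_apply, h1]
        · intro k _ hk
          have hik : ¬ ((i : ℕ) = (k : ℕ)) := by
            intro hcon
            exact hk (Fin.ext hcon.symm)
          simp [Matrix.of_apply, hik]
        · simp
      · rw [if_neg h]
        symm
        apply Finset.sum_eq_zero
        intro k _
        by_cases hik : (i : ℕ) = (k : ℕ)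
        · have hkj : ¬ ((k : ℕ) = (j : ℕ)) := by
            intro hc
            exact h ⟨by omega, by rw [hik]; exact k.isLt⟩
          simp [Matrix.of_apply, hkj]
        · simp [Matrix.of_apply, hik]
    calc (U * Shat * Vᵀ).rank ≤ (U * Shat).rank := Matrix.rank_mul_le_left _ _
      _ ≤ Shat.rank := Matrix.rank_mul_le_right _ _
      _ ≤ κ := by
          rw [hfac]
          refine le_trans (Matrix.rank_mul_le_left _ _) (le_trans (Matrix.rank_le_card_width _) ?_)
          simp
  · -- norm bound
    intro Z hZ
    have hrankW : (Uᵀ * Z * V).rank ≤ κ :=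
      le_trans (le_trans (Matrix.rank_mul_le_left _ _) (Matrix.rank_mul_le_right _ _)) hZ
    have hZeq : Z = U * (Uᵀ * Z * V) * Vᵀ := by
      calc Z = (U * Uᵀ) * Z * (V * Vᵀ) := by rw [hU1, hV1, Matrix.one_mul, Matrix.mul_one]
        _ = U * (Uᵀ * Z * V) * Vᵀ := by simp only [Matrix.mul_assoc]
    have e1 : U * Shat * Vᵀ - A = U * (Shat - S) * Vᵀ := by
      rw [hA, Matrix.mul_sub, Matrix.sub_mul]
    have e2 : Z - A = U * ((Uᵀ * Z * V) - S) * Vᵀ := by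
      nth_rewrite 1 [hZeq]
      rw [hA, Matrix.mul_sub, Matrix.sub_mul]
    rw [e1, e2]
    show Real.sqrt _ ≤ Real.sqrt _
    apply Real.sqrt_le_sqrt
    have c1 : ∑ i, ∑ j, (U * (Shat - S) * Vᵀ) i j ^ 2 = ∑ i, ∑ j, (Shat - S) i j ^ 2 :=
      fsq_conj U V hU2 hV2 _
    have c2 : ∑ i, ∑ j, (U * ((Uᵀ * Z * V) - S) * Vᵀ) i j ^ 2
        = ∑ i, ∑ j, ((Uᵀ * Z * V) - S) i j ^ 2 := fsq_conj U V hU2 hV2 _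
    rw [c1, c2]
    have hkey := key κ hκ' σ hσnn hσord S hS (Uᵀ * Z * V) hrankW
    have hdiag : ∑ i, ∑ j, (Shat - S) i j ^ 2 = ∑ k ∈ Finset.Ico κ (min m n), σ k ^ 2 := by
      have hentry : ∀ (i : Fin m) (j : Fin n), (Shat - S) i j
          = if (i : ℕ) = (j : ℕ) then ((if (i : ℕ) < κ then σ (i : ℕ) else 0) - σ (i : ℕ)) else 0 := by
        intro i j
        have : (Shat - S) i j = Shat i j - S i j := rfl
        rw [this, hShat, hS]
        by_cases hij : (i : ℕ) = (j : ℕ)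
        · by_cases hik : (i : ℕ) < κ
          · rw [if_pos ⟨hij, hik⟩, if_pos hij, if_pos hij, if_pos hik]
          · rw [if_neg (fun hc => hik hc.2), if_pos hij, if_pos hij, if_neg hik]
        · rw [if_neg (fun hc => hij hc.1), if_neg hij, if_neg hij]
          ring
      calc ∑ i, ∑ j, (Shat - S) i j ^ 2
          = ∑ i : Fin m, ∑ j : Fin n, (if (i : ℕ) = (j : ℕ) then
              ((if (i : ℕ) < κ then σ (i : ℕ) else 0) - σ (i : ℕ)) else 0) ^ 2 := by
            exact Finset.sum_congr rfl fun i _ => Finset.sum_congr rfl fun j _ => by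
              rw [hentry i j]
        _ = ∑ k ∈ Finset.range (min m n), ((if k < κ then σ k else 0) - σ k) ^ 2 :=
            sum_diag_sq (fun k => (if k < κ then σ k else 0) - σ k)
        _ = ∑ k ∈ Finset.range (min m n), (if k < κ then 0 else σ k ^ 2) := by
            refine Finset.sum_congr rfl fun k _ => ?_
            split <;> ring
        _ = ∑ k ∈ Finset.Ico κ (min m n), σ k ^ 2 := by
            rw [Finset.sum_ite]
            simp only [Finset.sum_const_zero, zero_add]
            congr 1
            ext k
            simp only [Finset.mem_filter, Finset.mem_range, Finset.mem_Ico, not_lt]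
            omega
    rw [hdiag]
    exact hkey
end
end
end
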